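/- arXiv:2306.10480 — 3 statements merged into one kernel-verified Lean document; each statement's English description precedes it below -/
import Mathlib

section
/- Let Z be a real n×n matrix that is symmetric (Zᵀ = Z) and idempotent (Z² = Z), let q ∈ ℝⁿ satisfy Z q = q, and let λ > 0. Define f(x) = (1/2)‖Z x − q‖₂² + λ ∑ᵢ |xᵢ|. Then x* ∈ ℝⁿ is a global minimizer of f if and only if there exists y* ∈ ℝⁿ such that Z x* − q + λ y* = 0 and y* = g(y* + x*), where g is the coordinatewise clamp to [−1,1]. -/
open Matrix

lemma clampFix {a b : ℝ} (h : a = max (-1) (min 1 (a+b))) : |a| ≤ 1 ∧ a * b = |b| := by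
  have h1 : a ≤ 1 := by rw [h]; exact max_le (by norm_num) (min_le_left _ _)
  have h2 : (-1:ℝ) ≤ a := by rw [h]; exact le_max_left _ _
  refine ⟨abs_le.mpr ⟨h2, h1⟩, ?_⟩
  rcases lt_trichotomy b 0 with hb | hb | hb
  · have ha : a = -1 := by
      rcases le_total (a+b) (-1) with hc | hc
      · rw [h, min_eq_right (by linarith : a+b ≤ 1), max_eq_left (by linarith)]
      · rcases le_total (a+b) 1 with hd | hd
        · exfalso; rw [min_eq_right hd, max_eq_right hc] at h; linarith
        · exfalso; rw [min_eq_left hd, max_eq_right (by norm_num)] at h; linarith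
    rw [ha, abs_of_neg hb]; ring
  · simp [hb]
  · have ha : a = 1 := by
      rcases le_total 1 (a+b) with hc | hc
      · rw [h, min_eq_left hc, max_eq_right (by norm_num)]
      · rcases le_total (-1) (a+b) with hd | hd
        · exfalso; rw [min_eq_right hc, max_eq_right hd] at h; linarith
        · exfalso; rw [min_eq_right hc, max_eq_left hd] at h; linarith
    rw [ha, abs_of_pos hb]; ring

lemma aux1 {c L a : ℝ} (hc : 0 ≤ c) (h : ∀ t : ℝ, 0 ≤ t*a + t^2*c + L*|t|) : a ≤ L := by
  by_contra h'
  push_neg at h'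
  have hd0 : 0 < a - L := by linarith
  set u := (a-L)/(2*c+1) with hu
  have hu0 : 0 < u := by positivity
  have huu : u*(2*c+1) = a - L := by rw [hu]; exact div_mul_cancel₀ _ (by positivity)
  have h5 := h (-u)
  rw [abs_neg, abs_of_pos hu0] at h5
  nlinarith [mul_pos hu0 hu0, mul_le_mul_of_nonneg_left huu.le hu0.le]

lemma aux1' {c L a : ℝ} (hc : 0 ≤ c) (h : ∀ t : ℝ, 0 ≤ t*a + t^2*c + L*|t|) : |a| ≤ L := by
  rw [abs_le]
  constructor
  · have h9 : -a ≤ L := aux1 (a := -a) (L := L) hc (fun t => by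
      have h6 := h (-t); rw [abs_neg] at h6; nlinarith [h6])
    linarith
  · exact aux1 hc h

lemma aux2 {c a s : ℝ} (hc : 0 ≤ c) (hs : 0 < s)
    (h : ∀ t : ℝ, |t| < s → 0 ≤ t*a + t^2*c) : a ≤ 0 := by
  by_contra h'
  push_neg at h'
  set e := min (s/2) (a/(c+1)) with he
  have he0 : 0 < e := lt_min (by linarith) (by positivity)
  have hes : e < s := lt_of_le_of_lt (min_le_left _ _) (by linarith)
  have he2 : e*(c+1) ≤ a := by
    have := min_le_right (s/2) (a/(c+1))
    rw [← he] at this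
    rw [← le_div_iff₀ (by linarith : (0:ℝ) < c+1)]
    exact this
  have h5 := h (-e) (by rw [abs_neg, abs_of_pos he0]; exact hes)
  nlinarith [mul_pos he0 he0, mul_le_mul_of_nonneg_left he2 he0.le]

lemma aux2' {c a s : ℝ} (hc : 0 ≤ c) (hs : 0 < s)
    (h : ∀ t : ℝ, |t| < s → 0 ≤ t*a + t^2*c) : a = 0 := by
  have h1 : a ≤ 0 := aux2 hc hs h
  have h2 : -a ≤ 0 := aux2 (a := -a) hc hs (fun t ht => by
    have := h (-t) (by rwa [abs_neg]); nlinarith)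
  linarith


/-- Optimality condition for `f(x) = (1/2)‖Z x − q‖₂² + λ ∑ᵢ |xᵢ|` with `Z` symmetric
idempotent and `Z q = q`: `x*` is a global minimizer iff there is `y*` with
`Z x* − q + λ y* = 0` and `y* = g (y* + x*)`, `g` the coordinatewise clamp to `[-1,1]`. -/
theorem stmt_3 (n : ℕ) (Z : Matrix (Fin n) (Fin n) ℝ)
    (hsym : Zᵀ = Z) (hidem : Z * Z = Z)
    (q : Fin n → ℝ) (hq : Z *ᵥ q = q)
    (lam : ℝ) (hlam : 0 < lam)
    (g : (Fin n → ℝ) → (Fin n → ℝ))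
    (hg : ∀ u i, g u i = max (-1) (min 1 (u i)))
    (f : (Fin n → ℝ) → ℝ)
    (hf : ∀ x, f x = (1/2) * (∑ i, ((Z *ᵥ x - q) i)^2) + lam * ∑ i, |x i|) :
    ∀ xs : Fin n → ℝ,
      (∀ x, f xs ≤ f x) ↔
        ∃ ys : Fin n → ℝ, Z *ᵥ xs - q + lam • ys = 0 ∧ ys = g (ys + xs) := by
  intro xs
  set r : Fin n → ℝ := Z *ᵥ xs - q with hrdef
  have hr : Z *ᵥ r = r := by
    have hzz : Z *ᵥ (Z *ᵥ xs) = Z *ᵥ xs := by rw [Matrix.mulVec_mulVec, hidem]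
    rw [hrdef, Matrix.mulVec_sub, hzz, hq]
  have hdot : ∀ u : Fin n → ℝ, ∑ j, r j * (Z *ᵥ u) j = ∑ j, r j * u j := by
    intro u
    have hd : r ⬝ᵥ (Z *ᵥ u) = (Zᵀ *ᵥ r) ⬝ᵥ u := by
      rw [Matrix.dotProduct_mulVec, Matrix.mulVec_transpose]
    rw [hsym, hr] at hd
    simpa [dotProduct] using hd
  constructor
  · -- forward: minimizer → optimality conditions
    intro hmin
    refine ⟨fun i => -(r i)/lam, ?_, ?_⟩
    · funext i
      show r i + lam * (-(r i)/lam) = 0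
      field_simp
      ring
    · funext i
      rw [hg]
      show -(r i)/lam = max (-1) (min 1 (-(r i)/lam + xs i))
      -- key inequality from minimality
      set v : Fin n → ℝ := Z *ᵥ (Pi.single i 1) with hvdef
      set C : ℝ := ∑ j, (v j)^2 with hCdef
      have hC0 : 0 ≤ C := Finset.sum_nonneg fun j _ => sq_nonneg _
      have hK : ∀ t : ℝ, 0 ≤ t * r i + t^2 * (C/2) + lam * (|xs i + t| - |xs i|) := by
        intro t
        have hle := hmin (xs + t • (Pi.single i 1 : Fin n → ℝ))
        rw [hf, hf] at hle
        have hZ : Z *ᵥ (xs + t • (Pi.single i 1 : Fin n → ℝ)) - q = r + t • v := by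
          rw [Matrix.mulVec_add, Matrix.mulVec_smul, hrdef, hvdef]
          funext j
          simp only [Pi.add_apply, Pi.sub_apply, Pi.smul_apply, smul_eq_mul]
          ring
        rw [hZ] at hle
        have h2 : ∑ j, ((r + t • v) j)^2
            = (∑ j, (r j)^2) + 2*t*(∑ j, r j * v j) + t^2 * C := by
          rw [hCdef, Finset.mul_sum, Finset.mul_sum, ← Finset.sum_add_distrib,
            ← Finset.sum_add_distrib]
          apply Finset.sum_congr rfl
          intro j _
          simp only [Pi.add_apply, Pi.smul_apply, smul_eq_mul]
          ring
        have h3 : ∑ j, r j * v j = r i := by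
          rw [hvdef, hdot]
          simp [Pi.single_apply]
        have h4 : ∑ j, |(xs + t • (Pi.single i 1 : Fin n → ℝ)) j|
            = (∑ j, |xs j|) + (|xs i + t| - |xs i|) := by
          have e1 : ∑ j, |(xs + t • (Pi.single i 1 : Fin n → ℝ)) j|
              = |xs i + t| + ∑ j ∈ Finset.univ.erase i, |xs j| := by
            rw [← Finset.add_sum_erase _ _ (Finset.mem_univ i)]
            congr 1
            · simp [mul_comm]
            · apply Finset.sum_congr rfl
              intro j hj
              simp [Pi.single_eq_of_ne (Finset.ne_of_mem_erase hj)]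
          have e2 : ∑ j, |xs j| = |xs i| + ∑ j ∈ Finset.univ.erase i, |xs j| :=
            (Finset.add_sum_erase _ _ (Finset.mem_univ i)).symm
          rw [e1, e2]; ring
        rw [h2, h3, h4] at hle
        linarith
      rcases lt_trichotomy (xs i) 0 with hxs | hxs | hxs
      · -- xs i < 0 : r i = lam, ys i = -1
        have hri : r i - lam = 0 := by
          apply aux2' (c := C/2) (s := -(xs i)) (by linarith) (by linarith)
          intro t ht
          have := hK t
          have habs : |xs i + t| = -(xs i + t) :=
            abs_of_neg (by rcases abs_lt.mp ht with ⟨h1, h2⟩; linarith)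
          rw [habs, abs_of_neg hxs] at this
          nlinarith
        have : -(r i)/lam = -1 := by field_simp; linarith
        rw [this, min_eq_right (by linarith), max_eq_left (by linarith)]
      · -- xs i = 0 : |r i| ≤ lam
        have hri : |r i| ≤ lam := by
          apply aux1' (c := C/2) (by linarith)
          intro t
          have := hK t
          rw [hxs] at this
          simpa using this
        rcases abs_le.mp hri with ⟨hl, hu⟩
        have hb1 : -(r i)/lam ≤ 1 := by rw [div_le_one hlam]; linarith
        have hb2 : (-1:ℝ) ≤ -(r i)/lam := by rw [le_div_iff₀ hlam]; linarith
        rw [hxs, add_zero, min_eq_right hb1, max_eq_right hb2]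
      · -- xs i > 0 : r i = -lam, ys i = 1
        have hri : r i + lam = 0 := by
          apply aux2' (c := C/2) (s := xs i) (by linarith) hxs
          intro t ht
          have := hK t
          have habs : |xs i + t| = xs i + t :=
            abs_of_pos (by rcases abs_lt.mp ht with ⟨h1, h2⟩; linarith)
          rw [habs, abs_of_pos hxs] at this
          nlinarith
        have : -(r i)/lam = 1 := by field_simp; linarith
        rw [this, min_eq_left (by linarith), max_eq_right (by linarith)]
  · -- backward: optimality conditions → minimizer
    rintro ⟨ys, h1, h2⟩ x
    have hy : ∀ j, |ys j| ≤ 1 ∧ ys j * xs j = |xs j| := by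
      intro j
      apply clampFix
      have := congrFun h2 j
      rw [hg] at this
      simpa using this
    have hb : ∀ j, r j = -(lam * ys j) := by
      intro j
      have := congrFun h1 j
      simp only [Pi.add_apply, Pi.smul_apply, smul_eq_mul, Pi.zero_apply, hrdef] at this ⊢
      linarith
    rw [hf, hf]
    set a : Fin n → ℝ := Z *ᵥ x - q with hadef
    have hsplit : ∑ j, (a j)^2
        = (∑ j, (r j)^2) + 2*(∑ j, r j * (a j - r j)) + ∑ j, (a j - r j)^2 := by
      rw [Finset.mul_sum, ← Finset.sum_add_distrib, ← Finset.sum_add_distrib]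
      apply Finset.sum_congr rfl
      intro j _
      ring
    have hZ2 : a - r = Z *ᵥ (x - xs) := by
      rw [Matrix.mulVec_sub, hadef, hrdef]
      funext j
      simp only [Pi.sub_apply]
      ring
    have hmid : ∑ j, r j * (a j - r j) = ∑ j, r j * (x j - xs j) := by
      calc ∑ j, r j * (a j - r j) = ∑ j, r j * ((Z *ᵥ (x - xs)) j) := by
            apply Finset.sum_congr rfl
            intro j _
            rw [← congrFun hZ2 j]
            simp [Pi.sub_apply]
        _ = ∑ j, r j * ((x - xs) j) := hdot _
        _ = ∑ j, r j * (x j - xs j) := by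
            apply Finset.sum_congr rfl; intro j _; simp [Pi.sub_apply]
    have hA : ∑ j, r j * (a j - r j)
        = lam * (∑ j, |xs j|) - lam * ∑ j, ys j * x j := by
      rw [hmid, Finset.mul_sum, Finset.mul_sum, ← Finset.sum_sub_distrib]
      apply Finset.sum_congr rfl
      intro j _
      rw [hb j]
      linear_combination lam * (hy j).2
    have hpos1 : 0 ≤ ∑ j, (a j - r j)^2 := Finset.sum_nonneg fun j _ => sq_nonneg _
    have hpos2 : ∑ j, ys j * x j ≤ ∑ j, |x j| := by
      apply Finset.sum_le_sum
      intro j _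
      calc ys j * x j ≤ |ys j * x j| := le_abs_self _
        _ = |ys j| * |x j| := abs_mul _ _
        _ ≤ 1 * |x j| := mul_le_mul_of_nonneg_right (hy j).1 (abs_nonneg _)
        _ = |x j| := one_mul _
    have hpos2' : lam * ∑ j, ys j * x j ≤ lam * ∑ j, |x j| :=
      mul_le_mul_of_nonneg_left hpos2 hlam.le
    linarith
end

section
/- Let A be any real m×n matrix. Then the matrix-valued function α ↦ A · (α (Aᵀ A + α I)⁻¹), defined for α > 0, tends to the zero matrix as α tends to 0 from the right. -/
open Matrix Filter

/-- For any real matrix `A`, the matrix `A · (α (Aᵀ A + α I)⁻¹)` tends to the zero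
matrix as `α → 0⁺`. -/
theorem stmt_9 (m n : ℕ) (A : Matrix (Fin m) (Fin n) ℝ) :
    Filter.Tendsto
      (fun α : ℝ => A * (α • (Aᵀ * A + α • (1 : Matrix (Fin n) (Fin n) ℝ))⁻¹))
      (nhdsWithin 0 (Set.Ioi 0)) (nhds (0 : Matrix (Fin m) (Fin n) ℝ)) := by
  have hBH : (Aᵀ * A).IsHermitian := by
    rw [← conjTranspose_eq_transpose_of_trivial]
    exact isHermitian_conjTranspose_mul_self A
  set U : Matrix (Fin n) (Fin n) ℝ := (hBH.eigenvectorUnitary : Matrix (Fin n) (Fin n) ℝ) with hU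
  set μ : Fin n → ℝ := hBH.eigenvalues with hμdef
  have hspec : Aᵀ * A = U * diagonal μ * star U := by
    have := hBH.spectral_theorem
    simpa using this
  have hUU : U * star U = 1 := (Matrix.mem_unitaryGroup_iff).mp hBH.eigenvectorUnitary.2
  have hUU' : star U * U = 1 := (Matrix.mem_unitaryGroup_iff').mp hBH.eigenvectorUnitary.2
  have hmulU : ∀ f g : Fin n → ℝ,
      (U * diagonal f * star U) * (U * diagonal g * star U)
        = U * diagonal (fun i => f i * g i) * star U := by
    intro f g
    simp only [Matrix.mul_assoc]
    rw [show star U * (U * (diagonal g * star U)) = diagonal g * star U from by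
      rw [← Matrix.mul_assoc, hUU', Matrix.one_mul]]
    rw [← Matrix.mul_assoc (diagonal f) (diagonal g), diagonal_mul_diagonal]
  -- the inverse formula for α > 0
  have hinv : ∀ α : ℝ, 0 < α →
      (Aᵀ * A + α • (1 : Matrix (Fin n) (Fin n) ℝ))⁻¹
        = U * diagonal (fun i => (μ i + α)⁻¹) * star U := by
    intro α hα
    have hsum : Aᵀ * A + α • (1 : Matrix (Fin n) (Fin n) ℝ)
        = U * diagonal (fun i => μ i + α) * star U := by
      have h1 : (α • (1 : Matrix (Fin n) (Fin n) ℝ)) = U * diagonal (fun _ => α) * star U := by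
        rw [← smul_one_eq_diagonal]
        rw [Matrix.mul_smul, Matrix.smul_mul, Matrix.mul_one, hUU]
      rw [hspec, h1, ← Matrix.add_mul, ← Matrix.mul_add, ← diagonal_add]
    apply inv_eq_right_inv
    rw [hsum, hmulU]
    have hμpos : ∀ i, 0 ≤ μ i := by
      intro i
      have : (Aᵀ * A).PosSemidef := by
        rw [← conjTranspose_eq_transpose_of_trivial]
        exact posSemidef_conjTranspose_mul_self A
      exact this.eigenvalues_nonneg i
    have : (fun i => (μ i + α) * (μ i + α)⁻¹) = fun _ => (1:ℝ) := by
      funext i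
      exact mul_inv_cancel₀ (by have := hμpos i; positivity)
    rw [this, diagonal_one, Matrix.mul_one, hUU]
  -- eventual form of the function
  have heq : ∀ α ∈ Set.Ioi (0:ℝ),
      A * (α • (Aᵀ * A + α • (1 : Matrix (Fin n) (Fin n) ℝ))⁻¹)
        = (A * U) * diagonal (fun i => α * (μ i + α)⁻¹) * star U := by
    intro α hα
    rw [hinv α hα, Matrix.mul_smul, ← Matrix.mul_assoc, ← Matrix.mul_assoc, ← Matrix.smul_mul,
      ← Matrix.mul_smul, ← diagonal_smul]
    congr 2
  -- the limit diagonal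
  set δ : Fin n → ℝ := fun i => if μ i = 0 then 1 else 0 with hδ
  have hd : Tendsto (fun α : ℝ => diagonal (fun i => α * (μ i + α)⁻¹))
      (nhdsWithin 0 (Set.Ioi 0)) (nhds (diagonal δ)) := by
    refine tendsto_pi_nhds.mpr ?_
    intro i
    rw [tendsto_pi_nhds]
    intro j
    by_cases hij : i = j
    · subst hij
      simp only [diagonal_apply_eq]
      by_cases h0 : μ i = 0
      · have hone : ∀ α ∈ Set.Ioi (0:ℝ), α * (μ i + α)⁻¹ = 1 := by
          intro α hα
          rw [h0, zero_add, mul_inv_cancel₀ (ne_of_gt hα)]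
        have h1 : δ i = 1 := by simp [hδ, h0]
        rw [h1]
        exact tendsto_const_nhds.congr' (by
          filter_upwards [self_mem_nhdsWithin] with α hα using (hone α hα).symm)
      · have h1 : δ i = 0 := by simp [hδ, h0]
        rw [h1]
        have hc : ContinuousAt (fun α : ℝ => α * (μ i + α)⁻¹) 0 := by
          apply ContinuousAt.mul continuousAt_id
          apply ContinuousAt.inv₀ (by fun_prop)
          simpa using h0
        have := hc.continuousWithinAt (s := Set.Ioi 0)
        simpa using this.tendsto
    · simp only [diagonal_apply_ne _ hij]
      exact tendsto_const_nhds
  have hlim : Tendsto (fun α : ℝ => (A * U) * diagonal (fun i => α * (μ i + α)⁻¹) * star U)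
      (nhdsWithin 0 (Set.Ioi 0)) (nhds ((A * U) * diagonal δ * star U)) := by
    have hcont : Continuous (fun M : Matrix (Fin n) (Fin n) ℝ => (A * U) * M * star U) :=
      (continuous_const.matrix_mul continuous_id).matrix_mul continuous_const
    exact (hcont.tendsto _).comp hd
  have hzero : (A * U) * diagonal δ = 0 := by
    ext j k
    rw [Matrix.mul_diagonal]
    by_cases h0 : μ k = 0
    · set v : Fin n → ℝ := ⇑(hBH.eigenvectorBasis k) with hv
      have hv0 : (Aᵀ * A) *ᵥ v = 0 := by
        rw [hv, hBH.mulVec_eigenvectorBasis,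
          show hBH.eigenvalues k = μ k from rfl, h0, zero_smul]
      have hAv : A *ᵥ v = 0 :=
        (conjTranspose_mul_self_mulVec_eq_zero A v).mp
          (by rwa [conjTranspose_eq_transpose_of_trivial])
      have hcol : (A * U) j k = (A *ᵥ v) j := by
        simp [Matrix.mul_apply, Matrix.mulVec, dotProduct, hU, hv]
      rw [hcol, hAv]
      simp
    · simp [hδ, h0]
  have hfinal : (A * U) * diagonal δ * star U = 0 := by
    rw [hzero, Matrix.zero_mul]
  rw [← hfinal]
  exact hlim.congr' (by
    filter_upwards [self_mem_nhdsWithin] with α hα using (heq α hα).symm)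
end

section
/- Let α > 0 and let v₁, …, v_m be real 1×S row vectors. Define P₀ = I (the S×S identity) and recursively P_{j+1} = P_j − (P_j v_{j+1}ᵀ v_{j+1} P_j) / (α + c_j), where c_j is the entry of the 1×1 matrix v_{j+1} P_j v_{j+1}ᵀ. Then for every 0 ≤ j ≤ m, P_j = α (∑_{i=1}^{j} v_iᵀ v_i + α I)⁻¹; in particular P_m = α (Vᵀ V + α I)⁻¹ where V is the m×S matrix whose rows are v₁, …, v_m. -/
open Matrix

private lemma fin_one_eq_smul_one (M : Matrix (Fin 1) (Fin 1) ℝ) : M = M 0 0 • 1 := by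
  ext i j
  fin_cases i; fin_cases j; simp

private lemma key_step {S : ℕ} (α : ℝ) (hα : 0 < α) (A : Matrix (Fin S) (Fin S) ℝ)
    (hA : A.PosDef) (w : Matrix (Fin 1) (Fin S) ℝ) :
    α • (wᵀ * w + A)⁻¹ =
      α • A⁻¹ - (α + (w * (α • A⁻¹) * wᵀ) 0 0)⁻¹ • ((α • A⁻¹) * wᵀ * w * (α • A⁻¹)) := by
  set B := A⁻¹ with hB
  set d : ℝ := (w * B * wᵀ) 0 0 with hd
  have hBpsd : B.PosSemidef := hA.inv.posSemidef
  have hwBwpsd : (w * B * wᵀ).PosSemidef := by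
    have := hBpsd.mul_mul_conjTranspose_same w
    rwa [conjTranspose_eq_transpose_of_trivial] at this
  have hd0 : 0 ≤ d := hwBwpsd.diag_nonneg
  have hc : α + α * d ≠ 0 := by positivity
  have hAB : A * B = 1 := mul_nonsing_inv A (isUnit_iff_ne_zero.mpr hA.det_pos.ne')
  have hwBw1 : w * B * wᵀ = d • (1 : Matrix (Fin 1) (Fin 1) ℝ) := fin_one_eq_smul_one _
  set k : ℝ := (α + α * d)⁻¹ * α with hk
  have h1 : wᵀ * w * (B * wᵀ * w * B) = d • (wᵀ * w * B) := by
    calc wᵀ * w * (B * wᵀ * w * B) = wᵀ * (w * B * wᵀ) * (w * B) := by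
          simp only [Matrix.mul_assoc]
      _ = d • (wᵀ * w * B) := by
          rw [hwBw1]
          simp [Matrix.mul_smul, Matrix.smul_mul, Matrix.mul_assoc]
  have prod : (wᵀ * w + A) * (B - k • (B * wᵀ * w * B)) = 1 := by
    have expand : (wᵀ * w + A) * (B - k • (B * wᵀ * w * B)) =
        wᵀ * w * B + A * B - k • (wᵀ * w * (B * wᵀ * w * B)) - k • (A * B * (wᵀ * w * B)) := by
      simp only [Matrix.mul_sub, Matrix.add_mul, Matrix.mul_smul, Matrix.mul_assoc, smul_add]
      abel
    rw [expand, hAB, h1, one_mul]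
    rw [smul_smul]
    have : k * d = 1 - k := by
      rw [hk, eq_sub_iff_add_eq, mul_assoc, ← mul_add, show α * d + α = α + α * d by ring, inv_mul_cancel₀ hc]
    rw [this]
    module
  have hinv : (wᵀ * w + A)⁻¹ = B - k • (B * wᵀ * w * B) := inv_eq_right_inv prod
  rw [hinv]
  have hentry : (w * (α • B) * wᵀ) 0 0 = α * d := by
    simp [Matrix.mul_smul, Matrix.smul_mul, hd]
  rw [hentry]
  have hmul : (α • B) * wᵀ * w * (α • B) = (α * α) • (B * wᵀ * w * B) := by
    simp [Matrix.mul_smul, Matrix.smul_mul, smul_smul, Matrix.mul_assoc]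
  rw [hmul, smul_sub, smul_smul, smul_smul, hk]
  ring_nf

/-- Recursive rank-one (RLS-style) computation of the orthogonal projector: starting
from `P 0 = I` and updating `P (j+1) = P j − (P j vⱼ₊₁ᵀ vⱼ₊₁ P j)/(α + cⱼ)` with
`cⱼ` the entry of `vⱼ₊₁ P j vⱼ₊₁ᵀ`, we get `P j = α (∑_{i<j} vᵢᵀ vᵢ + α I)⁻¹` for all
`j ≤ m`; in particular `P m = α (Vᵀ V + α I)⁻¹` where `V` has rows `v₁, …, v_m`. -/
theorem stmt_11 (m S : ℕ) (α : ℝ) (hα : 0 < α)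
    (v : ℕ → Matrix (Fin 1) (Fin S) ℝ)
    (V : Matrix (Fin m) (Fin S) ℝ) (hV : ∀ (i : Fin m) (s : Fin S), V i s = v i 0 s)
    (P : ℕ → Matrix (Fin S) (Fin S) ℝ)
    (hP0 : P 0 = 1)
    (hPrec : ∀ j < m, P (j + 1) =
      P j - (α + (v j * P j * (v j)ᵀ) 0 0)⁻¹ • (P j * (v j)ᵀ * v j * P j)) :
    (∀ j ≤ m, P j =
       α • ((∑ i ∈ Finset.range j, (v i)ᵀ * v i) + α • (1 : Matrix (Fin S) (Fin S) ℝ))⁻¹) ∧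
    P m = α • (Vᵀ * V + α • (1 : Matrix (Fin S) (Fin S) ℝ))⁻¹ := by
  have hApos : ∀ j : ℕ,
      ((∑ i ∈ Finset.range j, (v i)ᵀ * v i) + α • (1 : Matrix (Fin S) (Fin S) ℝ)).PosDef := by
    intro j
    have hsum : (∑ i ∈ Finset.range j, (v i)ᵀ * v i).PosSemidef := by
      refine Finset.sum_induction _ _ (fun a b ha hb => ha.add hb) ?_ ?_
      · simpa using (Matrix.PosSemidef.zero (n := Fin S) (R := ℝ))
      · intro i _
        have := posSemidef_conjTranspose_mul_self (v i)
        rwa [conjTranspose_eq_transpose_of_trivial] at this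
    have hone : (α • (1 : Matrix (Fin S) (Fin S) ℝ)).PosDef := by
      rw [smul_one_eq_diagonal]
      exact (posDef_diagonal_iff).mpr fun _ => hα
    exact Matrix.PosDef.posSemidef_add hsum hone
  have main : ∀ j ≤ m, P j =
      α • ((∑ i ∈ Finset.range j, (v i)ᵀ * v i) + α • (1 : Matrix (Fin S) (Fin S) ℝ))⁻¹ := by
    intro j hj
    induction j with
    | zero =>
      have h1 : ((0 : Matrix (Fin S) (Fin S) ℝ) + α • 1)⁻¹ = α⁻¹ • 1 := by
        apply inv_eq_right_inv
        rw [zero_add, smul_mul_smul_comm, one_mul, mul_inv_cancel₀ hα.ne', one_smul]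
      simpa [hP0, h1, smul_smul, mul_inv_cancel₀ hα.ne'] using congrArg (α • ·) h1.symm
    | succ j ih =>
      have hjm : j < m := hj
      have ihj := ih (le_of_lt hjm)
      have hA : ((∑ i ∈ Finset.range (j+1), (v i)ᵀ * v i) + α • (1 : Matrix (Fin S) (Fin S) ℝ))
          = (v j)ᵀ * v j + ((∑ i ∈ Finset.range j, (v i)ᵀ * v i) + α • 1) := by
        rw [Finset.sum_range_succ]; abel
      rw [hPrec j hjm, ihj, hA, key_step α hα _ (hApos j) (v j)]
  refine ⟨main, ?_⟩
  have hVV : Vᵀ * V = ∑ i ∈ Finset.range m, (v i)ᵀ * v i := by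
    ext s t
    simp only [Matrix.sum_apply, Matrix.mul_apply, Matrix.transpose_apply, Fin.sum_univ_one, hV]
    exact (Finset.sum_range fun i => v i 0 s * v i 0 t).symm
  rw [hVV]
  exact main m le_rfl
end
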